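/- Let A be an n×n symmetric positive definite real matrix, S ∈ ℝ^{n×k} with full column rank satisfying SᵀAS = I, and Y = AS. Let A₀ be symmetric positive definite, H₀ = A₀⁻¹, let W₀^A be a symmetric matrix with W₀^A S = Y, and let W₀^H be a symmetric positive definite matrix with Sᵀ(W₀^A A₀⁻¹ − A W₀^H) = 0. Define the symmetric-Kronecker posterior means A_k = A₀ + Δ_A U_Aᵀ + U_A Δ_Aᵀ − U_A Sᵀ Δ_A U_Aᵀ with Δ_A = Y − A₀S, U_A = W₀^A S(Sᵀ W₀^A S)⁻¹, and H_k = H₀ + Δ_H U_Hᵀ + U_H Δ_Hᵀ − U_H Yᵀ Δ_H U_Hᵀ with Δ_H = S − H₀Y, U_H = W₀^H Y(Yᵀ W₀^H Y)⁻¹. Then A_k is invertible and weak posterior correspondence holds: A_k⁻¹ Y = H_k Y. -/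

import Mathlib

open Matrix

/-- Weak posterior correspondence for the symmetric Kronecker covariance. -/
theorem stmt_3
    {n k : ℕ} (A : Matrix (Fin n) (Fin n) ℝ) (hA : A.PosDef)
    (S : Matrix (Fin n) (Fin k) ℝ) (hrank : S.rank = k) (hSAS : Sᵀ * A * S = 1)
    (A₀ : Matrix (Fin n) (Fin n) ℝ) (hA₀ : A₀.PosDef)
    (W₀A W₀H : Matrix (Fin n) (Fin n) ℝ) (hWA : W₀A.IsSymm) (hWH : W₀H.PosDef)
    (hWAS : W₀A * S = A * S)
    (hcompat : Sᵀ * (W₀A * A₀⁻¹ - A * W₀H) = 0) :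
    let Y := A * S
    let ΔA := Y - A₀ * S
    let UA := W₀A * S * (Sᵀ * W₀A * S)⁻¹
    let Ak := A₀ + ΔA * UAᵀ + UA * ΔAᵀ - UA * Sᵀ * ΔA * UAᵀ
    let ΔH := S - A₀⁻¹ * Y
    let UH := W₀H * Y * (Yᵀ * W₀H * Y)⁻¹
    let Hk := A₀⁻¹ + ΔH * UHᵀ + UH * ΔHᵀ - UH * Yᵀ * ΔH * UHᵀ
    IsUnit Ak.det ∧ Ak⁻¹ * Y = Hk * Y := by
  intro Y ΔA UA Ak ΔH UH Hk
  have hY : Y = A * S := rfl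
  have hΔA : ΔA = Y - A₀ * S := rfl
  have hUAdef : UA = W₀A * S * (Sᵀ * W₀A * S)⁻¹ := rfl
  have hAk : Ak = A₀ + ΔA * UAᵀ + UA * ΔAᵀ - UA * Sᵀ * ΔA * UAᵀ := rfl
  have hΔH : ΔH = S - A₀⁻¹ * Y := rfl
  have hUHdef : UH = W₀H * Y * (Yᵀ * W₀H * Y)⁻¹ := rfl
  have hHk : Hk = A₀⁻¹ + ΔH * UHᵀ + UH * ΔHᵀ - UH * Yᵀ * ΔH * UHᵀ := rfl
  clear_value Y ΔA UA Ak ΔH UH Hk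
  have hAT : Aᵀ = A := by rw [← conjTranspose_eq_transpose_of_trivial]; exact hA.1
  have hA0T : A₀ᵀ = A₀ := by rw [← conjTranspose_eq_transpose_of_trivial]; exact hA₀.1
  have hWHT : W₀Hᵀ = W₀H := by rw [← conjTranspose_eq_transpose_of_trivial]; exact hWH.1
  have hSTY : Sᵀ * Y = 1 := by rw [hY, ← Matrix.mul_assoc]; exact hSAS
  have hYTS : Yᵀ * S = 1 := by rw [hY, transpose_mul, hAT]; exact hSAS
  have hUA : UA = Y := by
    rw [hUAdef, Matrix.mul_assoc Sᵀ W₀A S, hWAS, ← Matrix.mul_assoc Sᵀ A S, hSAS,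
      inv_one, Matrix.mul_one, ← hY]
  have hΔAT : ΔAᵀ = Yᵀ - Sᵀ * A₀ := by
    rw [hΔA, transpose_sub, transpose_mul, hA0T]
  -- factorization of Ak
  have hfact : Ak = (1 - Y * Sᵀ) * A₀ * (1 - S * Yᵀ) + Y * Yᵀ := by
    have e1 : Y * Sᵀ * Y = Y := by rw [Matrix.mul_assoc, hSTY, Matrix.mul_one]
    rw [hAk, hUA, hΔAT, hΔA]
    simp only [Matrix.sub_mul, Matrix.mul_sub, Matrix.add_mul, Matrix.mul_add,
      Matrix.mul_one, Matrix.one_mul, ← Matrix.mul_assoc, e1]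
    abel
  have hAkS : Ak * S = Y := by
    have h1 : (1 - S * Yᵀ) * S = 0 := by
      rw [Matrix.sub_mul, Matrix.one_mul, Matrix.mul_assoc, hYTS, Matrix.mul_one, sub_self]
    rw [hfact, Matrix.add_mul, Matrix.mul_assoc _ (1 - S * Yᵀ) S, h1, Matrix.mul_zero,
      Matrix.mul_assoc, hYTS, Matrix.mul_one, zero_add]
  have hBt : (1 - Y * Sᵀ)ᵀ = 1 - S * Yᵀ := by
    rw [transpose_sub, transpose_one, transpose_mul, transpose_transpose]
  have hCt : (1 - S * Yᵀ)ᵀ = 1 - Y * Sᵀ := by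
    rw [transpose_sub, transpose_one, transpose_mul, transpose_transpose]
  -- Ak is positive definite
  have hAkPD : Ak.PosDef := by
    rw [hfact, posDef_iff_dotProduct_mulVec]
    constructor
    · show _ᴴ = _
      rw [conjTranspose_eq_transpose_of_trivial]
      simp only [transpose_add, transpose_mul, transpose_transpose, hA0T, hBt, hCt,
        Matrix.mul_assoc]
    · intro x hx
      rw [star_trivial]
      have key1 : x ⬝ᵥ ((1 - Y * Sᵀ) * A₀ * (1 - S * Yᵀ)) *ᵥ x
          = ((1 - S * Yᵀ) *ᵥ x) ⬝ᵥ A₀ *ᵥ ((1 - S * Yᵀ) *ᵥ x) := by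
        rw [← Matrix.mulVec_mulVec, ← Matrix.mulVec_mulVec, dotProduct_mulVec, ← hCt,
          vecMul_transpose]
      have key2 : x ⬝ᵥ (Y * Yᵀ) *ᵥ x = (Yᵀ *ᵥ x) ⬝ᵥ (Yᵀ *ᵥ x) := by
        rw [← Matrix.mulVec_mulVec, dotProduct_mulVec, ← mulVec_transpose]
      rw [add_mulVec, dotProduct_add, key1, key2]
      by_cases hw0 : Yᵀ *ᵥ x = 0
      · have hzx : (1 - S * Yᵀ) *ᵥ x = x := by
          rw [sub_mulVec, one_mulVec, ← Matrix.mulVec_mulVec, hw0, mulVec_zero, sub_zero]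
        have h1 : 0 < x ⬝ᵥ A₀ *ᵥ x := by simpa using hA₀.dotProduct_mulVec_pos hx
        rw [hzx, hw0]
        simpa using h1
      · have h1 : 0 ≤ ((1 - S * Yᵀ) *ᵥ x) ⬝ᵥ A₀ *ᵥ ((1 - S * Yᵀ) *ᵥ x) := by
          simpa using hA₀.posSemidef.dotProduct_mulVec_nonneg ((1 - S * Yᵀ) *ᵥ x)
        have h2 : 0 < (Yᵀ *ᵥ x) ⬝ᵥ (Yᵀ *ᵥ x) := by
          have h0 : 0 ≤ (Yᵀ *ᵥ x) ⬝ᵥ (Yᵀ *ᵥ x) := Finset.sum_nonneg fun i _ => mul_self_nonneg _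
          exact lt_of_le_of_ne h0 fun h => hw0 (dotProduct_self_eq_zero.mp h.symm)
        exact add_pos_of_nonneg_of_pos h1 h2
  have hdet : IsUnit Ak.det := hAkPD.det_pos.ne'.isUnit
  have hAinvY : Ak⁻¹ * Y = S := by
    rw [← hAkS, ← Matrix.mul_assoc, Matrix.nonsing_inv_mul _ hdet, Matrix.one_mul]
  -- the inverse model Gram matrix
  have hMT : (Yᵀ * W₀H * Y)ᵀ = Yᵀ * W₀H * Y := by
    rw [transpose_mul, transpose_mul, transpose_transpose, hWHT, Matrix.mul_assoc]
  have hMPD : (Yᵀ * W₀H * Y).PosDef := by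
    rw [posDef_iff_dotProduct_mulVec]
    constructor
    · show _ᴴ = _
      rw [conjTranspose_eq_transpose_of_trivial, hMT]
    · intro x hx
      rw [star_trivial]
      have hYx : Y *ᵥ x ≠ 0 := by
        intro h
        apply hx
        have h2 := congrArg (fun v => Sᵀ *ᵥ v) h
        simpa [Matrix.mulVec_mulVec, hSTY] using h2
      have key : x ⬝ᵥ (Yᵀ * W₀H * Y) *ᵥ x = (Y *ᵥ x) ⬝ᵥ W₀H *ᵥ (Y *ᵥ x) := by
        rw [← Matrix.mulVec_mulVec, ← Matrix.mulVec_mulVec, dotProduct_mulVec, vecMul_transpose]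
      rw [key]
      simpa using hWH.dotProduct_mulVec_pos hYx
  have hMdet : IsUnit (Yᵀ * W₀H * Y).det := hMPD.det_pos.ne'.isUnit
  have hUHTY : UHᵀ * Y = 1 := by
    rw [hUHdef, transpose_mul, transpose_mul, transpose_nonsing_inv, hMT, hWHT,
      Matrix.mul_assoc, Matrix.mul_assoc, ← Matrix.mul_assoc Yᵀ W₀H Y,
      Matrix.nonsing_inv_mul _ hMdet]
  have hA0iT : (A₀⁻¹)ᵀ = A₀⁻¹ := by rw [transpose_nonsing_inv, hA0T]
  have hsym : ΔHᵀ * Y = Yᵀ * ΔH := by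
    rw [hΔH, transpose_sub, transpose_mul, hA0iT, Matrix.sub_mul, Matrix.mul_sub, hSTY, hYTS,
      Matrix.mul_assoc]
  have hHkY : Hk * Y = S := by
    rw [hHk]
    simp only [Matrix.sub_mul, Matrix.add_mul, Matrix.mul_assoc, hUHTY, Matrix.mul_one]
    rw [hsym, hΔH]
    abel
  exact ⟨hdet, by rw [hAinvY, hHkY]⟩
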